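/- Let 0 ≤ R₀ < R₁ and let G : ℂ → ℂ be holomorphic on the annulus A(R₀,R₁) = {z ∈ ℂ : R₀ < |z| < R₁}. Then for every r with R₀ < r < R₁, one has r²·∫₀^{2π} ‖G′(r·e^{iθ})‖² dθ ≥ ∫₀^{2π} ‖G(r·e^{iθ})‖² dθ − (1/(2π))·‖∫₀^{2π} G(r·e^{iθ}) dθ‖², where G′ is the complex derivative of G. -/

import Mathlib

open Complex Real MeasureTheory Function Set AddCircle

lemma my_lift_continuous {T : ℝ} {f : ℝ → ℂ} (hf : Continuous f)
    (hp : Function.Periodic f T) : Continuous hp.lift := by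
  rw [isQuotientMap_quotient_mk'.continuous_iff]
  exact (funext fun x => (hp.lift_coe x).symm : f = hp.lift ∘ _) ▸ hf

lemma my_parseval {T : ℝ} [hT : Fact (0 < T)] (F : C(AddCircle T, ℂ)) :
    ∑' n : ℤ, ‖fourierCoeff (⇑F) n‖ ^ 2 = ∫ t, ‖F t‖ ^ 2 ∂haarAddCircle := by
  have h := tsum_sq_fourierCoeff (ContinuousMap.toLp (E := ℂ) 2 haarAddCircle ℂ F)
  simp_rw [fourierCoeff_toLp] at h
  rw [h]
  apply integral_congr_ae
  filter_upwards [ContinuousMap.coeFn_toLp (p := 2) (μ := haarAddCircle) (𝕜 := ℂ) F] with t ht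
  rw [ht]

lemma my_summable {T : ℝ} [hT : Fact (0 < T)] (F : C(AddCircle T, ℂ)) :
    Summable fun n : ℤ => ‖fourierCoeff (⇑F) n‖ ^ 2 := by
  have h := (lp.memℓp (fourierBasis.repr (ContinuousMap.toLp (E := ℂ) 2 haarAddCircle ℂ F))).summable
    (by norm_num)
  simp_rw [fourierBasis_repr, fourierCoeff_toLp] at h
  convert h using 2 with n
  norm_num

lemma my_bridge {f : ℝ → ℂ} (hp : Function.Periodic f (2 * π)) (n : ℤ) :
    haveI : Fact (0 < 2 * π) := ⟨Real.two_pi_pos⟩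
    fourierCoeff hp.lift n = fourierCoeffOn Real.two_pi_pos f n := by
  haveI : Fact (0 < 2 * π) := ⟨Real.two_pi_pos⟩
  rw [fourierCoeff_eq_intervalIntegral _ n 0, fourierCoeffOn_eq_integral, zero_add]
  congr 1
  · norm_num
  · apply intervalIntegral.integral_congr
    intro x hx
    simp only [Function.Periodic.lift_coe, fourier_coe_apply]
    norm_num

lemma my_coeff_bound {f g : ℝ → ℂ} (hg : Continuous g)
    (hpf : Function.Periodic f (2 * π))
    (hd : ∀ θ : ℝ, HasDerivAt f (g θ) θ) {n : ℤ} (hn : n ≠ 0) :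
    ‖fourierCoeffOn Real.two_pi_pos f n‖ ≤ ‖fourierCoeffOn Real.two_pi_pos g n‖ := by
  have hfT : f (2 * π) = f 0 := by simpa using hpf 0
  have h := fourierCoeffOn_of_hasDerivAt Real.two_pi_pos hn
    (fun x _ => hd x) (hg.intervalIntegrable 0 (2 * π))
  rw [hfT, sub_self, mul_zero, zero_sub] at h
  rw [h, norm_mul, norm_neg, norm_mul]
  have h2 : ‖(1 : ℂ) / (-2 * ↑π * I * ↑n)‖ = 1 / (2 * π * |(n : ℝ)|) := by
    simp [abs_of_pos Real.pi_pos]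
  have h3 : ‖((2 * π : ℝ) : ℂ) - ((0:ℝ) : ℂ)‖ = 2 * π := by
    norm_num
    exact Real.pi_nonneg
  rw [h2, h3]
  have hn1 : (1 : ℝ) ≤ |(n : ℝ)| := by
    rw [← Int.cast_abs]
    exact_mod_cast Int.one_le_abs hn
  have hpi : (0:ℝ) < 2 * π := Real.two_pi_pos
  set c := ‖fourierCoeffOn Real.two_pi_pos g n‖ with hc
  have hc0 : 0 ≤ c := norm_nonneg _
  calc 1 / (2 * π * |(n:ℝ)|) * (2 * π * c) = c / |(n:ℝ)| := by
        field_simp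
    _ ≤ c := div_le_self hc0 hn1

lemma my_interval_eq {f : ℝ → ℂ} (hp : Function.Periodic f (2 * π)) :
    haveI : Fact (0 < 2 * π) := ⟨Real.two_pi_pos⟩
    ∫ x in (0:ℝ)..(2*π), ‖f x‖ ^ 2 = 2 * π * ∫ t, ‖hp.lift t‖ ^ 2 ∂haarAddCircle := by
  haveI : Fact (0 < 2 * π) := ⟨Real.two_pi_pos⟩
  have h := AddCircle.intervalIntegral_preimage (2 * π) 0 (fun t => ‖hp.lift t‖ ^ 2)
  rw [zero_add] at h
  have h2 : ∀ x : ℝ, ‖hp.lift (x : AddCircle (2*π))‖ ^ 2 = ‖f x‖ ^ 2 := fun x => by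
    rw [hp.lift_coe]
  simp_rw [h2] at h
  rw [h, volume_eq_smul_haarAddCircle, integral_smul_measure,
    ENNReal.toReal_ofReal Real.two_pi_pos.le, smul_eq_mul]

lemma my_coeff_zero {f : ℝ → ℂ} (hp : Function.Periodic f (2 * π)) :
    haveI : Fact (0 < 2 * π) := ⟨Real.two_pi_pos⟩
    fourierCoeff hp.lift 0 = (1 / (2 * π) : ℝ) • ∫ x in (0:ℝ)..(2*π), f x := by
  haveI : Fact (0 < 2 * π) := ⟨Real.two_pi_pos⟩
  rw [fourierCoeff_eq_intervalIntegral _ 0 0, zero_add]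
  congr 1
  apply intervalIntegral.integral_congr
  intro x hx
  simp [Function.Periodic.lift_coe, fourier_zero]

lemma my_wirtinger {f g : ℝ → ℂ} (hf : Continuous f) (hg : Continuous g)
    (hpf : Function.Periodic f (2 * π)) (hpg : Function.Periodic g (2 * π))
    (hd : ∀ θ : ℝ, HasDerivAt f (g θ) θ) :
    (∫ θ in (0:ℝ)..(2*π), ‖f θ‖ ^ 2) - (1 / (2 * π)) * ‖∫ θ in (0:ℝ)..(2*π), f θ‖ ^ 2
      ≤ ∫ θ in (0:ℝ)..(2*π), ‖g θ‖ ^ 2 := by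
  haveI : Fact (0 < 2 * π) := ⟨Real.two_pi_pos⟩
  set F : C(AddCircle (2*π), ℂ) := ⟨hpf.lift, my_lift_continuous hf hpf⟩ with hF
  set Gc : C(AddCircle (2*π), ℂ) := ⟨hpg.lift, my_lift_continuous hg hpg⟩ with hGc
  have hSf : Summable fun n : ℤ => ‖fourierCoeff (⇑F) n‖ ^ 2 := my_summable F
  have hSg : Summable fun n : ℤ => ‖fourierCoeff (⇑Gc) n‖ ^ 2 := my_summable Gc
  -- termwise bound
  have hterm : ∀ n : ℤ, (if n = 0 then 0 else ‖fourierCoeff (⇑F) n‖ ^ 2)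
      ≤ ‖fourierCoeff (⇑Gc) n‖ ^ 2 := by
    intro n
    by_cases hn : n = 0
    · simp [hn, sq_nonneg]
    · simp only [hn, if_false]
      have h1 : ‖fourierCoeff (⇑F) n‖ ≤ ‖fourierCoeff (⇑Gc) n‖ := by
        show ‖fourierCoeff hpf.lift n‖ ≤ ‖fourierCoeff hpg.lift n‖
        rw [my_bridge hpf n, my_bridge hpg n]
        exact my_coeff_bound hg hpf hd hn
      exact pow_le_pow_left₀ (norm_nonneg _) h1 2
  have hSite : Summable fun n : ℤ => (if n = 0 then 0 else ‖fourierCoeff (⇑F) n‖ ^ 2) := by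
    apply Summable.of_nonneg_of_le _ hterm hSg
    intro n; by_cases hn : n = 0 <;> simp [hn, sq_nonneg]
  have hts : ∑' n : ℤ, (if n = 0 then 0 else ‖fourierCoeff (⇑F) n‖ ^ 2)
      ≤ ∑' n : ℤ, ‖fourierCoeff (⇑Gc) n‖ ^ 2 := Summable.tsum_le_tsum hterm hSite hSg
  have hsplit : ∑' n : ℤ, ‖fourierCoeff (⇑F) n‖ ^ 2
      = ‖fourierCoeff (⇑F) 0‖ ^ 2 + ∑' n : ℤ, (if n = 0 then 0 else ‖fourierCoeff (⇑F) n‖ ^ 2) :=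
    Summable.tsum_eq_add_tsum_ite hSf 0
  -- translate to integrals
  have hif : ∫ θ in (0:ℝ)..(2*π), ‖f θ‖ ^ 2 = 2 * π * ∑' n : ℤ, ‖fourierCoeff (⇑F) n‖ ^ 2 := by
    rw [my_parseval F]; exact my_interval_eq hpf
  have hig : ∫ θ in (0:ℝ)..(2*π), ‖g θ‖ ^ 2 = 2 * π * ∑' n : ℤ, ‖fourierCoeff (⇑Gc) n‖ ^ 2 := by
    rw [my_parseval Gc]; exact my_interval_eq hpg
  have hc0 : ‖fourierCoeff (⇑F) 0‖ ^ 2 = (1 / (2*π))^2 * ‖∫ θ in (0:ℝ)..(2*π), f θ‖ ^ 2 := by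
    show ‖fourierCoeff hpf.lift 0‖ ^ 2 = _
    rw [my_coeff_zero hpf, norm_smul, Real.norm_eq_abs, mul_pow,
      abs_of_pos (by positivity : (0:ℝ) < 1 / (2*π))]
  have hpi : (0:ℝ) < 2 * π := Real.two_pi_pos
  rw [hif, hig, hsplit, mul_add, hc0]
  have heq : 2 * π * ((1 / (2*π))^2 * ‖∫ θ in (0:ℝ)..(2*π), f θ‖ ^ 2)
      = (1 / (2*π)) * ‖∫ θ in (0:ℝ)..(2*π), f θ‖ ^ 2 := by
    field_simp
  rw [heq, add_sub_cancel_left]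
  exact mul_le_mul_of_nonneg_left hts hpi.le

/-- Osserman–Schiffer type inequality: for `G` holomorphic on an annulus,
`r² ∫₀^{2π} ‖G′‖² dθ ≥ ∫₀^{2π} ‖G‖² dθ − (1/(2π)) ‖∫₀^{2π} G dθ‖²`. -/
theorem stmt_7 (R₀ R₁ : ℝ) (hR₀ : 0 ≤ R₀) (hR : R₀ < R₁) (G : ℂ → ℂ)
    (hG : DifferentiableOn ℂ G
      {z : ℂ | R₀ < ‖z‖ ∧ ‖z‖ < R₁}) :
    ∀ r : ℝ, R₀ < r → r < R₁ →
      r ^ 2 * ∫ θ in (0:ℝ)..(2 * π),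
          ‖deriv G ((r : ℂ) * Complex.exp (θ * Complex.I))‖ ^ 2
        ≥ (∫ θ in (0:ℝ)..(2 * π),
            ‖G ((r : ℂ) * Complex.exp (θ * Complex.I))‖ ^ 2)
          - (1 / (2 * π)) *
            ‖∫ θ in (0:ℝ)..(2 * π),
              G ((r : ℂ) * Complex.exp (θ * Complex.I))‖ ^ 2 := by
  intro r hr0 hr1
  have hrpos : 0 < r := lt_of_le_of_lt hR₀ hr0
  set S := {z : ℂ | R₀ < ‖z‖ ∧ ‖z‖ < R₁} with hS
  have hopen : IsOpen S := by
    have : S = (fun z : ℂ => ‖z‖) ⁻¹' (Set.Ioo R₀ R₁) := rfl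
    rw [this]
    exact (isOpen_Ioo).preimage continuous_norm
  have hmem : ∀ θ : ℝ, (r : ℂ) * Complex.exp (θ * Complex.I) ∈ S := by
    intro θ
    have habs : ‖(r : ℂ) * Complex.exp (θ * Complex.I)‖ = r := by
      rw [norm_mul, Complex.norm_exp_ofReal_mul_I, mul_one, Complex.norm_real, Real.norm_eq_abs,
        abs_of_pos hrpos]
    exact ⟨by rw [habs]; exact hr0, by rw [habs]; exact hr1⟩
  set f : ℝ → ℂ := fun θ => G ((r : ℂ) * Complex.exp (θ * Complex.I)) with hf
  set g : ℝ → ℂ := fun θ =>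
    deriv G ((r : ℂ) * Complex.exp (θ * Complex.I)) *
      ((r : ℂ) * Complex.exp (θ * Complex.I) * Complex.I) with hg
  have hexp2pi : ∀ θ : ℝ, Complex.exp ((↑(θ + 2 * π)) * Complex.I)
      = Complex.exp (θ * Complex.I) := by
    intro θ
    push_cast
    rw [add_mul, Complex.exp_add, Complex.exp_two_pi_mul_I, mul_one]
  have hpf : Function.Periodic f (2 * π) := fun θ => by simp only [hf, hexp2pi]
  have hpg : Function.Periodic g (2 * π) := fun θ => by simp only [hg, hexp2pi]
  have hd : ∀ θ : ℝ, HasDerivAt f (g θ) θ := by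
    intro θ
    have h1 : HasDerivAt (fun z : ℂ => (r : ℂ) * Complex.exp (z * Complex.I))
        ((r : ℂ) * Complex.exp ((θ : ℂ) * Complex.I) * Complex.I) (θ : ℂ) := by
      have h0 : HasDerivAt (fun z : ℂ => z * Complex.I) Complex.I (θ : ℂ) := by
        simpa using (hasDerivAt_id (θ : ℂ)).mul_const Complex.I
      have he : HasDerivAt (fun z : ℂ => Complex.exp (z * Complex.I))
          (Complex.exp ((θ : ℂ) * Complex.I) * Complex.I) (θ : ℂ) :=
        (Complex.hasDerivAt_exp ((θ : ℂ) * Complex.I)).comp (θ : ℂ) h0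
      simpa [mul_assoc] using he.const_mul (r : ℂ)
    have hGd : HasDerivAt G (deriv G ((r : ℂ) * Complex.exp ((θ : ℂ) * Complex.I)))
        ((r : ℂ) * Complex.exp ((θ : ℂ) * Complex.I)) :=
      (hG.differentiableAt (hopen.mem_nhds (hmem θ))).hasDerivAt
    have := (hGd.comp (θ : ℂ) h1).comp_ofReal
    simpa [hf, hg, Function.comp] using this
  have hfc : Continuous f := by
    rw [continuous_iff_continuousAt]
    exact fun θ => (hd θ).differentiableAt.continuousAt
  have hinner : Continuous fun θ : ℝ => (r : ℂ) * Complex.exp (θ * Complex.I) := by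
    apply continuous_const.mul
    exact Complex.continuous_exp.comp (Complex.continuous_ofReal.mul continuous_const)
  have hdc : Continuous fun θ : ℝ => deriv G ((r : ℂ) * Complex.exp (θ * Complex.I)) := by
    rw [continuous_iff_continuousAt]
    intro θ
    have hA : AnalyticAt ℂ G ((r : ℂ) * Complex.exp (θ * Complex.I)) :=
      hG.analyticAt (hopen.mem_nhds (hmem θ))
    have h1 : ContinuousAt (fderiv ℂ G) ((r : ℂ) * Complex.exp (θ * Complex.I)) :=
      hA.fderiv.continuousAt
    have h2 : ContinuousAt (fun w => fderiv ℂ G w 1) ((r : ℂ) * Complex.exp (θ * Complex.I)) :=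
      ((ContinuousLinearMap.apply ℂ ℂ (1:ℂ)).continuous.continuousAt).comp h1
    have h3 : ContinuousAt (deriv G) ((r : ℂ) * Complex.exp (θ * Complex.I)) := by
      have : (deriv G) = fun w => fderiv ℂ G w 1 := rfl
      rw [this]; exact h2
    exact ContinuousAt.comp (f := fun θ : ℝ => (r : ℂ) * Complex.exp (↑θ * Complex.I)) h3 hinner.continuousAt
  have hgc : Continuous g := hdc.mul (hinner.mul continuous_const)
  have hW := my_wirtinger hfc hgc hpf hpg hd
  have hgnorm : ∀ θ : ℝ, ‖g θ‖ ^ 2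
      = r ^ 2 * ‖deriv G ((r : ℂ) * Complex.exp (θ * Complex.I))‖ ^ 2 := by
    intro θ
    simp only [hg, norm_mul, Complex.norm_exp_ofReal_mul_I,
      Complex.norm_I, Complex.norm_real, Real.norm_eq_abs, abs_of_pos hrpos]
    ring
  have : ∫ θ in (0:ℝ)..(2*π), ‖g θ‖ ^ 2
      = r ^ 2 * ∫ θ in (0:ℝ)..(2*π), ‖deriv G ((r : ℂ) * Complex.exp (θ * Complex.I))‖ ^ 2 := by
    simp_rw [hgnorm]
    exact intervalIntegral.integral_const_mul _ _
  rw [ge_iff_le, ← this]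
  exact hW
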